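/- The only pairs of coprime integers (u, v) with v^6 + 5 u^6 ∈ {1, 3^5, 3^4, 2·3^4, 2^5·3^4, 2^6·3^4} are (u, v) = (0, 1) and (0, −1). -/

import Mathlib

/-- The only pairs of coprime integers `(u, v)` with
`v⁶ + 5u⁶ ∈ {1, 3⁵, 3⁴, 2·3⁴, 2⁵·3⁴, 2⁶·3⁴}` are `(u, v) = (0, 1)` and `(0, −1)`. -/
theorem stmt_9 (u v : ℤ) (hcop : IsCoprime u v)
    (h : v ^ 6 + 5 * u ^ 6 ∈
      ({1, 3 ^ 5, 3 ^ 4, 2 * 3 ^ 4, 2 ^ 5 * 3 ^ 4, 2 ^ 6 * 3 ^ 4} : Set ℤ)) :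
    u = 0 ∧ (v = 1 ∨ v = -1) := by
  simp only [Set.mem_insert_iff, Set.mem_singleton_iff] at h
  have h6u : (0:ℤ) ≤ u ^ 6 := by positivity
  have h6v : (0:ℤ) ≤ v ^ 6 := by positivity
  have hle : v ^ 6 + 5 * u ^ 6 ≤ 5184 := by rcases h with h|h|h|h|h|h <;> omega
  have hsu : u ^ 2 ≤ 10 := by nlinarith [sq_nonneg u, sq_nonneg (u^2 - 10), sq_nonneg (u^2 + 10)]
  have hsv : v ^ 2 ≤ 17 := by nlinarith [sq_nonneg v, sq_nonneg (v^2 - 17), sq_nonneg (v^2 + 17)]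
  have hu1 : -3 ≤ u := by nlinarith [sq_nonneg (u + 3)]
  have hu2 : u ≤ 3 := by nlinarith [sq_nonneg (u - 3)]
  have hv1 : -4 ≤ v := by nlinarith [sq_nonneg (v + 4)]
  have hv2 : v ≤ 4 := by nlinarith [sq_nonneg (v - 4)]
  interval_cases u <;> interval_cases v <;> norm_num at h <;> norm_num
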